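/- For every norm-one quaternion a, the map Φ : ℍ × ℍ → ℍ × ℍ, (x, y) ↦ (x, a·y), is an algebra automorphism of the Cayley–Dickson double of ℍ with product (x, y)•(x', y') = (x·x' − ȳ'·y, y·x̄' + y'·x). -/

import Mathlib

/-- The Cayley–Dickson product on `ℍ × ℍ`. -/
noncomputable def cdMul (p q : Quaternion ℝ × Quaternion ℝ) : Quaternion ℝ × Quaternion ℝ :=
  (p.1 * q.1 - star q.2 * p.2, p.2 * star q.1 + q.2 * p.1)

theorem stmt_15 (a : Quaternion ℝ) (ha : ‖a‖ = 1) :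
    let Φ : Quaternion ℝ × Quaternion ℝ → Quaternion ℝ × Quaternion ℝ :=
      fun p => (p.1, a * p.2)
    Function.Bijective Φ ∧
      (∀ p q, Φ (p + q) = Φ p + Φ q) ∧
      (∀ (r : ℝ) (p), Φ (r • p) = r • Φ p) ∧
      (∀ p q, Φ (cdMul p q) = cdMul (Φ p) (Φ q)) := by
  intro Φ
  have ha0 : a ≠ 0 := by
    intro h; rw [h, norm_zero] at ha; norm_num at ha
  have hsa : star a * a = 1 := by
    rw [Quaternion.star_mul_self]
    have : Quaternion.normSq a = ‖a‖ * ‖a‖ := Quaternion.normSq_eq_norm_mul_self a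
    rw [this, ha]; norm_num
  refine ⟨⟨?_, ?_⟩, ?_, ?_, ?_⟩
  · rintro ⟨x, y⟩ ⟨x', y'⟩ h
    simp only [Φ, Prod.mk.injEq] at h
    obtain ⟨h1, h2⟩ := h
    exact Prod.ext h1 (mul_left_cancel₀ ha0 h2)
  · rintro ⟨x, y⟩
    exact ⟨(x, a⁻¹ * y), by simp [Φ, ← mul_assoc, mul_inv_cancel₀ ha0]⟩
  · intro p q; simp [Φ, mul_add]
  · intro r p; simp [Φ, mul_smul_comm]
  · rintro ⟨x, y⟩ ⟨x', y'⟩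
    simp only [Φ, cdMul, Prod.mk.injEq, mul_add, star_mul]
    constructor
    · congr 1
      rw [mul_assoc, ← mul_assoc (star a), hsa, one_mul]
    · rw [mul_assoc, mul_assoc]
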